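/- arXiv:0803.2622 — 5 statements merged into one kernel-verified Lean document; each statement's English description precedes it below -/
import Mathlib

section
/- Let H : ℝ^L → ℝⁿ be linear, z ∈ ℝⁿ with z_i > 0 for all i, λ > 0, ψ : ℝ → ℝ strictly convex, and C′ = {α ∈ ℝ^L : (Hα)_i ≥ 0 for all i}. Then the functional J(α) = Σ_{i=1}^n (1/2)(z_i − 2√((Hα)_i + 3/8))² + λ·Σ_{j=1}^L ψ(α_j) has at most one minimizer on C′. -/
/-- Midpoint convexity of the per-coordinate data-fidelity term
`η ↦ (1/2)(z − 2√(η + 3/8))²` on `[0, ∞)`, for `z ≥ 0`. -/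
lemma data_mid (z x y : ℝ) (hz : 0 ≤ z) (hx : 0 ≤ x) (hy : 0 ≤ y) :
    (1 / 2) * (z - 2 * Real.sqrt ((x + y) / 2 + 3 / 8)) ^ 2 ≤
      ((1 / 2) * (z - 2 * Real.sqrt (x + 3 / 8)) ^ 2
        + (1 / 2) * (z - 2 * Real.sqrt (y + 3 / 8)) ^ 2) / 2 := by
  set s := Real.sqrt (x + 3 / 8) with hs_def
  set t := Real.sqrt (y + 3 / 8) with ht_def
  set u := Real.sqrt ((x + y) / 2 + 3 / 8) with hu_def
  have hs : 0 ≤ s := Real.sqrt_nonneg _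
  have ht : 0 ≤ t := Real.sqrt_nonneg _
  have hu : 0 ≤ u := Real.sqrt_nonneg _
  have hs2 : s ^ 2 = x + 3 / 8 := Real.sq_sqrt (by linarith)
  have ht2 : t ^ 2 = y + 3 / 8 := Real.sq_sqrt (by linarith)
  have hu2 : u ^ 2 = (x + y) / 2 + 3 / 8 := Real.sq_sqrt (by linarith)
  have key : s + t ≤ 2 * u := by nlinarith [sq_nonneg (s - t)]
  nlinarith [mul_le_mul_of_nonneg_left key hz]

/-- Uniqueness of the minimizer (Theorem 1 of the paper, strictly convex
penalty): if `ψ` is strictly convex, the functional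
`J(α) = Σᵢ (1/2)(zᵢ − 2√((Hα)ᵢ + 3/8))² + λ Σⱼ ψ(αⱼ)` has at most one
minimizer on `C′ = {α : (Hα)ᵢ ≥ 0 ∀ i}`. -/
theorem deconvolution_functional_unique_minimizer_strictConvex (n L : ℕ)
    (H : (Fin L → ℝ) →ₗ[ℝ] (Fin n → ℝ)) (z : Fin n → ℝ) (hz : ∀ i, 0 < z i)
    (lam : ℝ) (hlam : 0 < lam) (ψ : ℝ → ℝ) (hψ : StrictConvexOn ℝ Set.univ ψ)
    (J : (Fin L → ℝ) → ℝ)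
    (hJ : ∀ α, J α = ∑ i, (1 / 2) * (z i - 2 * Real.sqrt (H α i + 3 / 8)) ^ 2
            + lam * ∑ j, ψ (α j))
    (a b : Fin L → ℝ)
    (ha : ∀ i, 0 ≤ H a i) (hb : ∀ i, 0 ≤ H b i)
    (hmina : ∀ α : Fin L → ℝ, (∀ i, 0 ≤ H α i) → J a ≤ J α)
    (hminb : ∀ α : Fin L → ℝ, (∀ i, 0 ≤ H α i) → J b ≤ J α) :
    a = b := by
  by_contra hab
  set m : Fin L → ℝ := (1 / 2 : ℝ) • a + (1 / 2 : ℝ) • b with hm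
  have hHm : ∀ i, H m i = (H a i + H b i) / 2 := by
    intro i
    simp only [hm, map_add, map_smul, Pi.add_apply, Pi.smul_apply, smul_eq_mul]
    ring
  have hmj : ∀ j, m j = (1 / 2) * a j + (1 / 2) * b j := by
    intro j
    simp [hm]
  have hmC : ∀ i, 0 ≤ H m i := by
    intro i
    rw [hHm]
    linarith [ha i, hb i]
  have hJab : J a = J b := le_antisymm (hmina b hb) (hminb a ha)
  have hdata : ∑ i, (1 / 2) * (z i - 2 * Real.sqrt (H m i + 3 / 8)) ^ 2 ≤
      (∑ i, (1 / 2) * (z i - 2 * Real.sqrt (H a i + 3 / 8)) ^ 2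
        + ∑ i, (1 / 2) * (z i - 2 * Real.sqrt (H b i + 3 / 8)) ^ 2) / 2 := by
    rw [← Finset.sum_add_distrib, Finset.sum_div]
    apply Finset.sum_le_sum
    intro i _
    rw [hHm]
    exact data_mid (z i) _ _ (hz i).le (ha i) (hb i)
  have hpen : ∑ j, ψ (m j) < (∑ j, ψ (a j) + ∑ j, ψ (b j)) / 2 := by
    rw [← Finset.sum_add_distrib, Finset.sum_div]
    obtain ⟨j0, hj0⟩ := Function.ne_iff.mp hab
    apply Finset.sum_lt_sum
    · intro j _
      have h := hψ.convexOn.2 (Set.mem_univ (a j)) (Set.mem_univ (b j))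
        (by norm_num : (0:ℝ) ≤ 1 / 2) (by norm_num : (0:ℝ) ≤ 1 / 2) (by norm_num)
      simp only [smul_eq_mul] at h
      rw [hmj j]
      linarith
    · refine ⟨j0, Finset.mem_univ _, ?_⟩
      have h := hψ.2 (Set.mem_univ (a j0)) (Set.mem_univ (b j0)) hj0
        (by norm_num : (0:ℝ) < 1 / 2) (by norm_num : (0:ℝ) < 1 / 2) (by norm_num)
      simp only [smul_eq_mul] at h
      rw [hmj j0]
      linarith
  have hpen' : lam * ∑ j, ψ (m j) <
      lam * ((∑ j, ψ (a j) + ∑ j, ψ (b j)) / 2) :=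
    mul_lt_mul_of_pos_left hpen hlam
  have hJm : J m < J a := by
    have hJa := hJ a
    have hJb := hJ b
    have hJm' := hJ m
    rw [hJa, hJb] at hJab
    rw [hJm', hJa]
    nlinarith [hdata, hpen']
  exact absurd hJm (not_lt.mpr (hmina m hmC))
end

section
/- Let ψ : ℝ → ℝ be convex, even, nonnegative, nondecreasing on [0, ∞), continuous, with ψ(0) = 0, and suppose ψ has right derivative d = ψ′₊(0) > 0 at 0. Let δ > 0, β ∈ ℝ, and let α̂ be the unique minimizer of α ↦ δψ(α) + (1/2)(α − β)². Then α̂ = 0 if and only if |β| ≤ δ·d. -/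
open Filter Set Topology


/-- Thresholding characterization (Theorem 2 of the paper): with `ψ` convex,
even, nonnegative, nondecreasing on `[0, ∞)`, continuous, `ψ(0) = 0`, and
right derivative `d = ψ′₊(0) > 0`, the unique minimizer `α̂` of
`α ↦ δψ(α) + (1/2)(α − β)²` vanishes iff `|β| ≤ δ·d`. -/
theorem prox_eq_zero_iff (ψ : ℝ → ℝ)
    (hconv : ConvexOn ℝ Set.univ ψ)
    (heven : ∀ t, ψ (-t) = ψ t)
    (hnonneg : ∀ t, 0 ≤ ψ t)
    (hmono : MonotoneOn ψ (Set.Ici (0 : ℝ)))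
    (hcont : Continuous ψ)
    (hzero : ψ 0 = 0)
    (d : ℝ) (hd : 0 < d)
    (hderiv : HasDerivWithinAt ψ d (Set.Ici (0 : ℝ)) 0)
    (δ : ℝ) (hδ : 0 < δ) (β : ℝ) (αhat : ℝ)
    (hmin : ∀ t : ℝ,
      δ * ψ αhat + (1 / 2) * (αhat - β) ^ 2 ≤ δ * ψ t + (1 / 2) * (t - β) ^ 2)
    (huniq : ∀ α : ℝ,
      (∀ t : ℝ, δ * ψ α + (1 / 2) * (α - β) ^ 2 ≤ δ * ψ t + (1 / 2) * (t - β) ^ 2) →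
      α = αhat) :
    αhat = 0 ↔ |β| ≤ δ * d := by
  have heq : Set.Ici (0:ℝ) \ {0} = Set.Ioi 0 := by
    ext x
    simp only [Set.mem_diff, Set.mem_Ici, Set.mem_singleton_iff, Set.mem_Ioi]
    constructor
    · rintro ⟨h1, h2⟩; exact lt_of_le_of_ne h1 (Ne.symm h2)
    · intro h; exact ⟨le_of_lt h, ne_of_gt h⟩
  have hslope : Tendsto (fun t => ψ t / t) (𝓝[>] (0:ℝ)) (𝓝 d) := by
    have h := hasDerivWithinAt_iff_tendsto_slope.mp hderiv
    rw [heq] at h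
    refine h.congr ?_
    intro t
    simp [slope_def_field, hzero]
  have hsm : ∀ r t : ℝ, 0 < r → r < t → ψ r / r ≤ ψ t / t := by
    intro r t hr hrt
    have ht : 0 < t := hr.trans hrt
    have h0a : (0:ℝ) ≤ 1 - r / t := by
      have : r / t ≤ 1 := by rw [div_le_one ht]; linarith
      linarith
    have h0b : (0:ℝ) ≤ r / t := by positivity
    have hab : (1 - r / t) + r / t = 1 := by ring
    have hc := hconv.2 (Set.mem_univ (0:ℝ)) (Set.mem_univ t) h0a h0b hab
    simp only [smul_eq_mul, mul_zero, zero_add, hzero] at hc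
    rw [div_mul_cancel₀ _ (ne_of_gt ht)] at hc
    rw [div_le_div_iff₀ hr ht]
    have := mul_le_mul_of_nonneg_right hc ht.le
    calc ψ r * t ≤ r / t * ψ t * t := this
      _ = ψ t * r := by field_simp
  have hlin : ∀ t : ℝ, 0 ≤ t → d * t ≤ ψ t := by
    intro t ht
    rcases eq_or_lt_of_le ht with h | h
    · simp [← h, hzero]
    · have hdle : d ≤ ψ t / t := by
        refine le_of_tendsto hslope ?_
        filter_upwards [Ioo_mem_nhdsGT_of_mem ⟨le_refl (0:ℝ), h⟩] with r hr
        exact hsm r t hr.1 hr.2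
      calc d * t ≤ ψ t / t * t := mul_le_mul_of_nonneg_right hdle h.le
        _ = ψ t := div_mul_cancel₀ _ (ne_of_gt h)
  have habs : ∀ t : ℝ, d * |t| ≤ ψ t := by
    intro t
    rcases le_or_gt 0 t with h | h
    · rw [abs_of_nonneg h]; exact hlin t h
    · rw [abs_of_neg h, ← heven t]; exact hlin (-t) (by linarith)
  constructor
  · intro h0
    subst h0
    have hkey : ∀ t : ℝ, β * t - t ^ 2 / 2 ≤ δ * ψ t := by
      intro t
      have := hmin t
      simp only [hzero, mul_zero, zero_add] at this
      nlinarith [this]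
    have hne : (𝓝[>] (0:ℝ)).NeBot := nhdsGT_neBot 0
    have hδψ : Tendsto (fun t => δ * (ψ t / t)) (𝓝[>] (0:ℝ)) (𝓝 (δ * d)) :=
      hslope.const_mul δ
    have h1 : β ≤ δ * d := by
      have hf : Tendsto (fun t : ℝ => β - t / 2) (𝓝[>] (0:ℝ)) (𝓝 β) := by
        have : Tendsto (fun t : ℝ => β - t / 2) (𝓝 (0:ℝ)) (𝓝 (β - 0 / 2)) :=
          (continuous_const.sub (continuous_id.div_const 2)).tendsto 0
        simpa using this.mono_left nhdsWithin_le_nhds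
      refine le_of_tendsto_of_tendsto hf hδψ ?_
      filter_upwards [self_mem_nhdsWithin] with t ht
      have ht' : (0:ℝ) < t := ht
      have hk := hkey t
      rw [mul_div_assoc', le_div_iff₀ ht']
      nlinarith [hk]
    have h2 : -β ≤ δ * d := by
      have hf : Tendsto (fun t : ℝ => -β - t / 2) (𝓝[>] (0:ℝ)) (𝓝 (-β)) := by
        have : Tendsto (fun t : ℝ => -β - t / 2) (𝓝 (0:ℝ)) (𝓝 (-β - 0 / 2)) :=
          (continuous_const.sub (continuous_id.div_const 2)).tendsto 0
        simpa using this.mono_left nhdsWithin_le_nhds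
      refine le_of_tendsto_of_tendsto hf hδψ ?_
      filter_upwards [self_mem_nhdsWithin] with t ht
      have ht' : (0:ℝ) < t := ht
      have hk := hkey (-t)
      rw [heven] at hk
      rw [mul_div_assoc', le_div_iff₀ ht']
      nlinarith [hk]
    exact abs_le.mpr ⟨by linarith, h1⟩
  · intro hb
    refine (huniq 0 ?_).symm
    intro t
    have hβt : β * t ≤ δ * d * |t| := by
      calc β * t ≤ |β * t| := le_abs_self _
        _ = |β| * |t| := abs_mul _ _
        _ ≤ δ * d * |t| := mul_le_mul_of_nonneg_right hb (abs_nonneg t)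
    have hψ : δ * (d * |t|) ≤ δ * ψ t := mul_le_mul_of_nonneg_left (habs t) hδ.le
    simp only [hzero, mul_zero, zero_add]
    nlinarith [sq_nonneg t]
end

section
/- Let ψ : ℝ → ℝ be convex, even, nonnegative, nondecreasing on [0, ∞), continuous, with ψ(0) = 0, twice differentiable on ℝ \ {0}, and with right derivative d = ψ′₊(0) > 0 at 0. Let δ > 0, β ∈ ℝ with |β| > δ·d, and let α̂ be the unique minimizer of α ↦ δψ(α) + (1/2)(α − β)². Then α̂ ≠ 0, α̂ has the same sign as β, and α̂ satisfies α̂ = β − δψ′(α̂). -/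
/-- Key descent lemma: if the right derivative of `ψ` at `0` is `d` and
`δ * d < β`, then some `t` beats `0` for the prox objective. -/
lemma prox_descent (ψ : ℝ → ℝ) (hzero : ψ 0 = 0) (d : ℝ)
    (hrderiv : HasDerivWithinAt ψ d (Set.Ici (0 : ℝ)) 0)
    (δ : ℝ) (hδ : 0 < δ) (β : ℝ) (hβ : δ * d < β) :
    ∃ t : ℝ, δ * ψ t + (1 / 2) * (t - β) ^ 2 < δ * ψ 0 + (1 / 2) * (0 - β) ^ 2 := by
  have hset : Set.Ici (0:ℝ) \ {0} = Set.Ioi 0 := by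
    ext x
    simp [Set.mem_diff, le_iff_lt_or_eq, eq_comm, or_and_right]
  have hslope := hasDerivWithinAt_iff_tendsto_slope.1 hrderiv
  rw [hset] at hslope
  set ε : ℝ := (β - δ * d) / (2 * δ) with hε
  have hεpos : 0 < ε := div_pos (by linarith) (by linarith)
  have h1 : ∀ᶠ t in nhdsWithin 0 (Set.Ioi (0:ℝ)), slope ψ 0 t < d + ε :=
    hslope.eventually_lt_const (by linarith)
  have h2 : ∀ᶠ t in nhdsWithin 0 (Set.Ioi (0:ℝ)), t < β - δ * d :=
    eventually_nhdsWithin_of_eventually_nhds (eventually_lt_nhds (by linarith))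
  have h3 : ∀ᶠ t in nhdsWithin 0 (Set.Ioi (0:ℝ)), 0 < t :=
    eventually_mem_nhdsWithin
  obtain ⟨t, ht1, ht2, ht3⟩ := (h1.and (h2.and h3)).exists
  refine ⟨t, ?_⟩
  have hslope_t : slope ψ 0 t = ψ t / t := by
    simp [slope, hzero, div_eq_inv_mul]
  rw [hslope_t] at ht1
  have hψt : ψ t < (d + ε) * t := by
    have := (div_lt_iff₀ ht3).1 ht1
    linarith
  have hδψ : δ * ψ t < δ * ((d + ε) * t) := by
    exact (mul_lt_mul_iff_right₀ hδ).2 hψt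
  have hεδ : δ * ε = (β - δ * d) / 2 := by
    field_simp [hε]
    rw [hε]; field_simp
  nlinarith [sq_nonneg t, ht2, ht3]

/-- Stationarity above the threshold (Theorem 2 of the paper): with `ψ`
convex, even, nonnegative, nondecreasing on `[0, ∞)`, continuous, `ψ(0) = 0`,
twice differentiable away from `0`, and right derivative `d = ψ′₊(0) > 0`,
if `|β| > δ·d` then the unique minimizer `α̂` of `α ↦ δψ(α) + (1/2)(α − β)²`
is nonzero, has the same sign as `β`, and satisfies `α̂ = β − δψ′(α̂)`. -/
theorem prox_above_threshold (ψ ψ' ψ'' : ℝ → ℝ)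
    (hconv : ConvexOn ℝ Set.univ ψ)
    (heven : ∀ t, ψ (-t) = ψ t)
    (hnonneg : ∀ t, 0 ≤ ψ t)
    (hmono : MonotoneOn ψ (Set.Ici (0 : ℝ)))
    (hcont : Continuous ψ)
    (hzero : ψ 0 = 0)
    (hderiv1 : ∀ x : ℝ, x ≠ 0 → HasDerivAt ψ (ψ' x) x)
    (hderiv2 : ∀ x : ℝ, x ≠ 0 → HasDerivAt ψ' (ψ'' x) x)
    (d : ℝ) (hd : 0 < d)
    (hrderiv : HasDerivWithinAt ψ d (Set.Ici (0 : ℝ)) 0)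
    (δ : ℝ) (hδ : 0 < δ) (β : ℝ) (hβ : δ * d < |β|) (αhat : ℝ)
    (hmin : ∀ t : ℝ,
      δ * ψ αhat + (1 / 2) * (αhat - β) ^ 2 ≤ δ * ψ t + (1 / 2) * (t - β) ^ 2)
    (huniq : ∀ α : ℝ,
      (∀ t : ℝ, δ * ψ α + (1 / 2) * (α - β) ^ 2 ≤ δ * ψ t + (1 / 2) * (t - β) ^ 2) →
      α = αhat) :
    αhat ≠ 0 ∧ 0 < αhat * β ∧ αhat = β - δ * ψ' αhat := by
  have hβne : β ≠ 0 := by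
    intro h
    rw [h, abs_zero] at hβ
    nlinarith
  -- αhat ≠ 0
  have hne : αhat ≠ 0 := by
    intro h0
    rcases lt_or_gt_of_ne hβne with hneg | hpos
    · -- β < 0 : use the descent lemma for -β and reflect
      have hβ' : δ * d < -β := by rwa [abs_of_neg hneg] at hβ
      obtain ⟨t, ht⟩ := prox_descent ψ hzero d hrderiv δ hδ (-β) hβ'
      have := hmin (-t)
      rw [h0] at this
      have hev : ψ (-t) = ψ t := heven t
      nlinarith [this]
    · have hβ' : δ * d < β := by rwa [abs_of_pos hpos] at hβ
      obtain ⟨t, ht⟩ := prox_descent ψ hzero d hrderiv δ hδ β hβ'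
      have := hmin t
      rw [h0] at this
      linarith
  -- sign
  have hsign : 0 < αhat * β := by
    rcases lt_trichotomy (αhat * β) 0 with h | h | h
    · exfalso
      have := hmin (-αhat)
      rw [heven αhat] at this
      nlinarith
    · exact absurd h (mul_ne_zero hne hβne)
    · exact h
  refine ⟨hne, hsign, ?_⟩
  -- stationarity
  have hF : HasDerivAt (fun t : ℝ => δ * ψ t + (1 / 2) * (t - β) ^ 2)
      (δ * ψ' αhat + (αhat - β)) αhat := by
    have h1 := (hderiv1 αhat hne).const_mul δ
    have h2 : HasDerivAt (fun t : ℝ => (1 / 2) * (t - β) ^ 2) (αhat - β) αhat := by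
      have : HasDerivAt (fun t : ℝ => (t - β) ^ 2) (2 * (αhat - β)) αhat := by
        simpa using (((hasDerivAt_id αhat).sub_const β).fun_pow 2)
      have : HasDerivAt (fun t : ℝ => (1 / 2) * (t - β) ^ 2) ((1 / 2) * (2 * (αhat - β))) αhat :=
        this.const_mul (1 / 2 : ℝ)
      convert this using 1
      ring
    exact h1.add h2
  have hloc : IsLocalMin (fun t : ℝ => δ * ψ t + (1 / 2) * (t - β) ^ 2) αhat :=
    Filter.Eventually.of_forall hmin
  have := hloc.hasDerivAt_eq_zero hF
  linarith
end

section
/- Let Φ : ℝ^L → ℝⁿ be a linear map satisfying Φ ∘ Φᵀ = A·Id_{ℝⁿ} for some A > 0 (a tight frame synthesis operator), let C ⊆ ℝⁿ be a nonempty closed convex set, and let C′ = {α ∈ ℝ^L : Φα ∈ C}. Then for every α ∈ ℝ^L, the point P_{C′}(α) = α + A⁻¹Φᵀ(P_C(Φα) − Φα) = A⁻¹Φᵀ(P_C(Φα)) + (Id − A⁻¹ΦᵀΦ)(α) is the unique nearest point of C′ to α in the Euclidean norm, where P_C denotes the metric projection onto C. -/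
set_option maxHeartbeats 1000000


/-- Projection onto `C′ = Φ⁻¹(C)` for a tight frame synthesis operator `Φ`
(with `Φ Φᵀ = A·Id`, `A > 0`): the point
`P_{C′}(α) = α + A⁻¹Φᵀ(P_C(Φα) − Φα) = A⁻¹Φᵀ(P_C(Φα)) + (Id − A⁻¹ΦᵀΦ)(α)`
is the unique nearest point of `C′` to `α`, where `P_C` is the metric
projection onto the nonempty closed convex set `C`. -/
theorem proj_preimage_tight_frame (n L : ℕ)
    (Φ : EuclideanSpace ℝ (Fin L) →L[ℝ] EuclideanSpace ℝ (Fin n))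
    (A : ℝ) (hA : 0 < A)
    (hframe : Φ.comp (ContinuousLinearMap.adjoint Φ) =
      A • ContinuousLinearMap.id ℝ (EuclideanSpace ℝ (Fin n)))
    (C : Set (EuclideanSpace ℝ (Fin n)))
    (hCne : C.Nonempty) (hCclosed : IsClosed C) (hCconvex : Convex ℝ C)
    (PC : EuclideanSpace ℝ (Fin n) → EuclideanSpace ℝ (Fin n))
    (hPC : ∀ x, PC x ∈ C ∧ ∀ c ∈ C, ‖x - PC x‖ ≤ ‖x - c‖)
    (α : EuclideanSpace ℝ (Fin L)) :
    α + A⁻¹ • ContinuousLinearMap.adjoint Φ (PC (Φ α) - Φ α) =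
      A⁻¹ • ContinuousLinearMap.adjoint Φ (PC (Φ α)) +
        (α - A⁻¹ • ContinuousLinearMap.adjoint Φ (Φ α)) ∧
    α + A⁻¹ • ContinuousLinearMap.adjoint Φ (PC (Φ α) - Φ α) ∈ {β | Φ β ∈ C} ∧
    (∀ c ∈ {β : EuclideanSpace ℝ (Fin L) | Φ β ∈ C},
      ‖α - (α + A⁻¹ • ContinuousLinearMap.adjoint Φ (PC (Φ α) - Φ α))‖ ≤ ‖α - c‖ ∧
      (‖α - (α + A⁻¹ • ContinuousLinearMap.adjoint Φ (PC (Φ α) - Φ α))‖ = ‖α - c‖ →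
        c = α + A⁻¹ • ContinuousLinearMap.adjoint Φ (PC (Φ α) - Φ α))) := by
  set T := ContinuousLinearMap.adjoint Φ with hTdef
  set p := PC (Φ α) with hpdef
  have hA' : A ≠ 0 := ne_of_gt hA
  -- Φ ∘ T = A • id, pointwise
  have hPhiT : ∀ v, Φ (T v) = A • v := by
    intro v
    have := ContinuousLinearMap.ext_iff.mp hframe v
    simpa using this
  -- ‖T v‖² = A ‖v‖²
  have hTnorm : ∀ v, ‖T v‖ ^ 2 = A * ‖v‖ ^ 2 := by
    intro v
    have h1 : (inner ℝ (T v) (T v) : ℝ) = inner ℝ v (Φ (T v)) :=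
      ContinuousLinearMap.adjoint_inner_left Φ (T v) v
    rw [hPhiT, real_inner_smul_right, real_inner_self_eq_norm_sq,
      real_inner_self_eq_norm_sq] at h1
    exact h1
  have hTnormsm : ∀ v, ‖A⁻¹ • T v‖ ^ 2 = A⁻¹ * ‖v‖ ^ 2 := by
    intro v
    rw [norm_smul, Real.norm_eq_abs, abs_of_pos (inv_pos.mpr hA), mul_pow, hTnorm]
    field_simp
  -- Pythagoras : ‖x‖² = ‖x - A⁻¹•T(Φx)‖² + A⁻¹‖Φx‖²
  have hPyth : ∀ x : EuclideanSpace ℝ (Fin L),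
      ‖x‖ ^ 2 = ‖x - A⁻¹ • T (Φ x)‖ ^ 2 + A⁻¹ * ‖Φ x‖ ^ 2 := by
    intro x
    have horth : (inner ℝ (x - A⁻¹ • T (Φ x)) (A⁻¹ • T (Φ x)) : ℝ) = 0 := by
      have h1 : (inner ℝ x (T (Φ x)) : ℝ) = inner ℝ (Φ x) (Φ x) :=
        ContinuousLinearMap.adjoint_inner_right Φ x (Φ x)
      have h2 : (inner ℝ (T (Φ x)) (T (Φ x)) : ℝ) = A * inner ℝ (Φ x) (Φ x) := by
        have := ContinuousLinearMap.adjoint_inner_left Φ (T (Φ x)) (Φ x)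
        rw [hPhiT, real_inner_smul_right] at this
        exact this
      rw [inner_sub_left, real_inner_smul_right, real_inner_smul_left,
        real_inner_smul_right, h1, h2]
      field_simp
      ring
    have hx : x = (x - A⁻¹ • T (Φ x)) + A⁻¹ • T (Φ x) := by abel
    calc ‖x‖ ^ 2 = ‖(x - A⁻¹ • T (Φ x)) + A⁻¹ • T (Φ x)‖ ^ 2 := by rw [← hx]
      _ = ‖x - A⁻¹ • T (Φ x)‖ ^ 2 + 2 * inner ℝ (x - A⁻¹ • T (Φ x)) (A⁻¹ • T (Φ x))
            + ‖A⁻¹ • T (Φ x)‖ ^ 2 := norm_add_sq_real _ _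
      _ = ‖x - A⁻¹ • T (Φ x)‖ ^ 2 + A⁻¹ * ‖Φ x‖ ^ 2 := by
            rw [horth, hTnormsm]; ring
  have hkey : ∀ x : EuclideanSpace ℝ (Fin L), A⁻¹ * ‖Φ x‖ ^ 2 ≤ ‖x‖ ^ 2 := by
    intro x
    have := hPyth x
    nlinarith [sq_nonneg (‖x - A⁻¹ • T (Φ x)‖)]
  -- the candidate point
  set β := α + A⁻¹ • T (p - Φ α) with hβdef
  -- norm of α - β
  have hαβ : α - β = -(A⁻¹ • T (p - Φ α)) := by rw [hβdef]; abel
  have hβnorm : ‖α - β‖ ^ 2 = A⁻¹ * ‖Φ α - p‖ ^ 2 := by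
    rw [hαβ, norm_neg, hTnormsm, norm_sub_rev]
  -- Φ β = p
  have hΦβ : Φ β = p := by
    rw [hβdef, map_add, map_smul, hPhiT, smul_smul, inv_mul_cancel₀ hA', one_smul]
    abel
  refine ⟨by rw [hβdef, map_sub, smul_sub]; abel, ?_, ?_⟩
  · show Φ β ∈ C
    rw [hΦβ]; exact (hPC (Φ α)).1
  intro c hc
  have hc' : Φ c ∈ C := hc
  have hproj : ‖Φ α - p‖ ≤ ‖Φ α - Φ c‖ := (hPC (Φ α)).2 _ hc'
  have hkey' : A⁻¹ * ‖Φ α - Φ c‖ ^ 2 ≤ ‖α - c‖ ^ 2 := by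
    have := hkey (α - c)
    rwa [map_sub] at this
  have hle2 : ‖α - β‖ ^ 2 ≤ ‖α - c‖ ^ 2 := by
    rw [hβnorm]
    calc A⁻¹ * ‖Φ α - p‖ ^ 2 ≤ A⁻¹ * ‖Φ α - Φ c‖ ^ 2 :=
          mul_le_mul_of_nonneg_left (pow_le_pow_left₀ (norm_nonneg _) hproj 2)
            (inv_nonneg.mpr hA.le)
      _ ≤ ‖α - c‖ ^ 2 := hkey'
  have hle : ‖α - β‖ ≤ ‖α - c‖ := by
    have := Real.sqrt_le_sqrt hle2
    rwa [Real.sqrt_sq (norm_nonneg _), Real.sqrt_sq (norm_nonneg _)] at this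
  refine ⟨hle, ?_⟩
  intro heq
  -- equality: everything collapses
  have hsq : ‖α - c‖ ^ 2 = A⁻¹ * ‖Φ α - p‖ ^ 2 := by rw [← heq, hβnorm]
  have hnormeq : ‖Φ α - p‖ = ‖Φ α - Φ c‖ := by
    have hb2 : ‖Φ α - Φ c‖ ^ 2 ≤ ‖Φ α - p‖ ^ 2 :=
      (mul_le_mul_iff_right₀ (inv_pos.mpr hA)).mp (hkey'.trans_eq hsq)
    have hb : ‖Φ α - Φ c‖ ≤ ‖Φ α - p‖ := by
      have := Real.sqrt_le_sqrt hb2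
      rwa [Real.sqrt_sq (norm_nonneg _), Real.sqrt_sq (norm_nonneg _)] at this
    exact le_antisymm hproj hb
  -- uniqueness of projection in the convex set: Φ c = p
  have hΦc : Φ c = p := by
    have hm : (2:ℝ)⁻¹ • p + (2:ℝ)⁻¹ • (Φ c) ∈ C := by
      refine hCconvex (hPC (Φ α)).1 hc' (by norm_num) (by norm_num) (by norm_num)
    have hmle : ‖Φ α - p‖ ≤ ‖Φ α - ((2:ℝ)⁻¹ • p + (2:ℝ)⁻¹ • (Φ c))‖ := (hPC (Φ α)).2 _ hm
    have hpar := parallelogram_law_with_norm ℝ (Φ α - p) (Φ α - Φ c)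
    have hsum : (Φ α - p) + (Φ α - Φ c) =
        (2:ℝ) • (Φ α - ((2:ℝ)⁻¹ • p + (2:ℝ)⁻¹ • (Φ c))) := by
      rw [smul_sub, smul_add, smul_smul, smul_smul]
      norm_num
      module
    rw [hsum] at hpar
    rw [norm_smul] at hpar
    have hdiff : ‖Φ c - p‖ = 0 := by
      have h2 : ‖(Φ α - p) - (Φ α - Φ c)‖ = ‖Φ c - p‖ := by
        congr 1; abel
      rw [h2] at hpar
      simp only [Real.norm_ofNat] at hpar
      rw [← hnormeq] at hpar
      nlinarith [mul_self_le_mul_self (norm_nonneg (Φ α - p)) hmle,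
        norm_nonneg (Φ c - p)]
    have := norm_eq_zero.mp hdiff
    exact sub_eq_zero.mp this
  -- the Pythagoras residual vanishes: α - c = A⁻¹ • T (Φ α - Φ c)
  have hres : α - c = A⁻¹ • T (Φ (α - c)) := by
    have hP := hPyth (α - c)
    have hres0 : ‖(α - c) - A⁻¹ • T (Φ (α - c))‖ ^ 2 = 0 := by
      have hΦac : ‖Φ (α - c)‖ = ‖Φ α - Φ c‖ := by rw [map_sub]
      rw [hΦac, ← hnormeq] at hP
      linarith
    have h0 : ‖(α - c) - A⁻¹ • T (Φ (α - c))‖ = 0 :=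
      pow_eq_zero_iff two_ne_zero |>.mp hres0
    exact sub_eq_zero.mp (norm_eq_zero.mp h0)
  have hfin : α - c = α - β := by
    rw [hres, map_sub, hΦc, hβdef]
    rw [map_sub, smul_sub, map_sub, smul_sub]
    abel
  have : c = α - (α - c) := by abel
  rw [this, hfin, hβdef]
  abel
end

section
/- Let f₁ : ℝ^L → ℝ be convex and differentiable with κ-Lipschitz gradient (κ > 0), let f₂ : ℝ^L → ℝ be convex and continuous, and suppose the set M of minimizers of f₁ + f₂ is nonempty. Let (μ_t)_{t≥0} satisfy 0 < inf_t μ_t ≤ sup_t μ_t < 2/κ, fix α₀ ∈ ℝ^L, and for each t ≥ 0 let α_{t+1} be the unique minimizer of x ↦ μ_t f₂(x) + (1/2)‖x − (α_t − μ_t ∇f₁(α_t))‖². Then the sequence (α_t) converges to some element of M. -/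
open Filter Set Topology
local notation "⟪" x ", " y "⟫" => @inner ℝ _ _ x y

section Aux
variable {E : Type*} [NormedAddCommGroup E] [InnerProductSpace ℝ E] [CompleteSpace E]

set_option linter.unusedSectionVars false

lemma fbc_hasDerivAt_line {f : E → ℝ} (hf : Differentiable ℝ f) (x v : E) (s : ℝ) :
    HasDerivAt (fun s : ℝ => f (x + s • v)) ⟪gradient f (x + s • v), v⟫ s := by
  have h1 : HasDerivAt (fun s : ℝ => x + s • v) v s := by
    simpa using ((hasDerivAt_id s).smul_const v).const_add x
  have h2 := (hf (x + s • v)).hasGradientAt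
  rw [hasGradientAt_iff_hasFDerivAt] at h2
  have h3 := h2.comp_hasDerivAt s h1
  have e : ⟪gradient f (x + s • v), v⟫ = (InnerProductSpace.toDual ℝ E (gradient f (x + s • v))) v := by
    simp
  rw [e]; exact h3

lemma fbc_convex_grad {f : E → ℝ} (hconv : ConvexOn ℝ Set.univ f) (hdiff : Differentiable ℝ f)
    (x y : E) : f x + ⟪gradient f x, y - x⟫ ≤ f y := by
  have hline : ConvexOn ℝ Set.univ (fun s : ℝ => f (x + s • (y - x))) := by
    have h := hconv.comp_affineMap (AffineMap.lineMap x y)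
    simp only [Set.preimage_univ] at h
    have he : (fun s : ℝ => f (x + s • (y - x))) = f ∘ (AffineMap.lineMap x y) := by
      funext s
      simp only [Function.comp_apply, AffineMap.lineMap_apply_module]
      congr 1
      module
    rw [he]; exact h
  have hd : HasDerivAt (fun s : ℝ => f (x + s • (y - x))) ⟪gradient f x, y - x⟫ 0 := by
    simpa using fbc_hasDerivAt_line hdiff x (y - x) 0
  have := hline.le_slope_of_hasDerivAt (Set.mem_univ (0:ℝ)) (Set.mem_univ (1:ℝ)) one_pos hd
  have h01 : slope (fun s : ℝ => f (x + s • (y - x))) 0 1 = f y - f x := by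
    have e1 : x + (1:ℝ) • (y - x) = y := by module
    have e0 : x + (0:ℝ) • (y - x) = x := by module
    simp [slope_def_field, e1, e0]
  rw [h01] at this
  linarith

lemma fbc_descent {f : E → ℝ} (hdiff : Differentiable ℝ f) {κ : ℝ} (hκ : 0 < κ)
    (hlip : LipschitzWith (Real.toNNReal κ) (gradient f)) (x y : E) :
    f y ≤ f x + ⟪gradient f x, y - x⟫ + κ / 2 * ‖y - x‖ ^ 2 := by
  set v := y - x with hv
  set φ : ℝ → ℝ := fun s => f (x + s • v) - f x - s * ⟪gradient f x, v⟫ with hφ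
  set φ' : ℝ → ℝ := fun s => ⟪gradient f (x + s • v) - gradient f x, v⟫ with hφ'
  have hder : ∀ s : ℝ, HasDerivAt φ (φ' s) s := by
    intro s
    have h1 := (fbc_hasDerivAt_line hdiff x v s).sub_const (f x)
    have h2 : HasDerivAt (fun s : ℝ => s * ⟪gradient f x, v⟫) ⟪gradient f x, v⟫ s := by
      simpa using (hasDerivAt_id s).mul_const (⟪gradient f x, v⟫ : ℝ)
    have := h1.sub h2
    have e : φ' s = ⟪gradient f (x + s • v), v⟫ - ⟪gradient f x, v⟫ := by
      simp only [φ', inner_sub_left]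
    rw [e]; exact this
  have hbound : ∀ s ∈ Ico (0:ℝ) 1, ‖φ' s‖ ≤ (κ * ‖v‖ ^ 2) * s := by
    intro s hs
    have h1 : ‖φ' s‖ ≤ ‖gradient f (x + s • v) - gradient f x‖ * ‖v‖ := by
      simpa [φ'] using abs_real_inner_le_norm (gradient f (x + s • v) - gradient f x) v
    have h2 : ‖gradient f (x + s • v) - gradient f x‖ ≤ κ * (s * ‖v‖) := by
      have h := hlip.dist_le_mul (x + s • v) x
      rw [dist_eq_norm, dist_eq_norm] at h
      simp only [add_sub_cancel_left] at h
      calc ‖gradient f (x + s • v) - gradient f x‖ ≤ (κ.toNNReal : ℝ) * ‖s • v‖ := h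
        _ = κ * (s * ‖v‖) := by
            rw [norm_smul, Real.coe_toNNReal _ hκ.le, Real.norm_eq_abs, abs_of_nonneg hs.1]
    calc ‖φ' s‖ ≤ (κ * (s * ‖v‖)) * ‖v‖ :=
          h1.trans (mul_le_mul_of_nonneg_right h2 (norm_nonneg v))
      _ = (κ * ‖v‖ ^ 2) * s := by ring
  have hB : ∀ s : ℝ, HasDerivAt (fun s : ℝ => κ * ‖v‖ ^ 2 * s ^ 2 / 2) ((κ * ‖v‖ ^ 2) * s) s := by
    intro s
    have := ((hasDerivAt_pow 2 s).const_mul (κ * ‖v‖ ^ 2)).div_const 2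
    convert this using 1
    · rfl
    · rfl
    · ring
  have key := image_norm_le_of_norm_deriv_right_le_deriv_boundary
    (f := φ) (f' := φ') (a := 0) (b := 1)
    (fun s _ => ((hder s).continuousAt).continuousWithinAt)
    (fun s _ => (hder s).hasDerivWithinAt)
    (by simp [φ]) hB hbound (right_mem_Icc.2 zero_le_one)
  have h1 : x + (1:ℝ) • v = y := by simp [hv]
  rw [Real.norm_eq_abs, abs_le] at key
  have := key.2
  simp only [φ, h1, one_mul, one_pow] at this
  linarith

lemma fbc_bh {f : E → ℝ} (hconv : ConvexOn ℝ Set.univ f) (hdiff : Differentiable ℝ f)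
    {κ : ℝ} (hκ : 0 < κ) (hlip : LipschitzWith (Real.toNNReal κ) (gradient f)) (x y : E) :
    f x + ⟪gradient f x, y - x⟫ + 1 / (2 * κ) * ‖gradient f y - gradient f x‖ ^ 2 ≤ f y := by
  set d := gradient f y - gradient f x with hd
  set z := y - (1 / κ) • d with hz
  have h1 := fbc_convex_grad hconv hdiff x z
  have h2 := fbc_descent hdiff hκ hlip y z
  have e1 : z - y = -((1 / κ) • d) := by simp [hz]
  have e2 : ⟪gradient f y, z - y⟫ = -(1 / κ) * ⟪gradient f y, d⟫ := by
    rw [e1, inner_neg_right, real_inner_smul_right]; ring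
  have e3 : ‖z - y‖ ^ 2 = (1 / κ) ^ 2 * ‖d‖ ^ 2 := by
    rw [e1, norm_neg, norm_smul]
    simp [abs_of_nonneg (le_of_lt (one_div_pos.2 hκ)), mul_pow]
  have e4 : ⟪gradient f x, z - x⟫ = ⟪gradient f x, y - x⟫ - (1 / κ) * ⟪gradient f x, d⟫ := by
    have : z - x = (y - x) - (1 / κ) • d := by rw [hz]; abel
    rw [this, inner_sub_right, real_inner_smul_right]
  have e5 : ⟪gradient f y, d⟫ - ⟪gradient f x, d⟫ = ‖d‖ ^ 2 := by
    rw [← inner_sub_left, ← hd, real_inner_self_eq_norm_sq]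
  rw [e4] at h1
  rw [e2, e3] at h2
  have hκ' : κ ≠ 0 := ne_of_gt hκ
  have e6 : κ / 2 * ((1 / κ) ^ 2 * ‖d‖ ^ 2) = 1 / (2 * κ) * ‖d‖ ^ 2 := by
    field_simp
  have e9 : 1 / κ * ⟪gradient f y, d⟫ - 1 / κ * ⟪gradient f x, d⟫ = 1 / κ * ‖d‖ ^ 2 := by
    rw [← mul_sub, e5]
  have e8 : 1 / κ * ‖d‖ ^ 2 - 1 / (2 * κ) * ‖d‖ ^ 2 = 1 / (2 * κ) * ‖d‖ ^ 2 := by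
    field_simp; ring
  linarith

lemma fbc_cocoercive {f : E → ℝ} (hconv : ConvexOn ℝ Set.univ f) (hdiff : Differentiable ℝ f)
    {κ : ℝ} (hκ : 0 < κ) (hlip : LipschitzWith (Real.toNNReal κ) (gradient f)) (x y : E) :
    (1 / κ) * ‖gradient f y - gradient f x‖ ^ 2 ≤ ⟪gradient f y - gradient f x, y - x⟫ := by
  have h1 := fbc_bh hconv hdiff hκ hlip x y
  have h2 := fbc_bh hconv hdiff hκ hlip y x
  have e1 : ‖gradient f x - gradient f y‖ = ‖gradient f y - gradient f x‖ := norm_sub_rev _ _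
  have e2 : ⟪gradient f y - gradient f x, y - x⟫
      = ⟪gradient f y, y - x⟫ - ⟪gradient f x, y - x⟫ := inner_sub_left _ _ _
  have e3 : ⟪gradient f y, x - y⟫ = -⟪gradient f y, y - x⟫ := by
    rw [show x - y = -(y - x) by abel, inner_neg_right]
  rw [e1] at h2
  rw [e3] at h2
  have hκ' : κ ≠ 0 := ne_of_gt hκ
  rw [e2]
  have h3 : 1 / (2 * κ) * ‖gradient f y - gradient f x‖ ^ 2 + 1 / (2 * κ) * ‖gradient f y - gradient f x‖ ^ 2 = (1 / κ) * ‖gradient f y - gradient f x‖ ^ 2 := by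
    field_simp; ring
  linarith

lemma fbc_le_limit {A B C : ℝ} (h : ∀ l : ℝ, 0 < l → l ≤ 1 → A ≤ B + l * C) (hC : 0 ≤ C) :
    A ≤ B := by
  refine le_of_forall_pos_le_add fun ε hε => ?_
  rcases eq_or_lt_of_le hC with h0 | h0
  · have := h 1 one_pos le_rfl
    nlinarith
  · have hl : 0 < min 1 (ε / C) := lt_min one_pos (div_pos hε h0)
    have h1 := h _ hl (min_le_left _ _)
    have h2 : min 1 (ε / C) * C ≤ ε := by
      calc min 1 (ε / C) * C ≤ (ε / C) * C :=
            mul_le_mul_of_nonneg_right (min_le_right _ _) hC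
        _ = ε := div_mul_cancel₀ _ (ne_of_gt h0)
    linarith

lemma fbc_min_subgrad {f₁ f₂ : E → ℝ} (hdiff : Differentiable ℝ f₁)
    {κ : ℝ} (hκ : 0 < κ) (hlip : LipschitzWith (Real.toNNReal κ) (gradient f₁))
    (hf₂conv : ConvexOn ℝ Set.univ f₂) {m : E}
    (hm : ∀ y, f₁ m + f₂ m ≤ f₁ y + f₂ y) (x : E) :
    -⟪gradient f₁ m, x - m⟫ ≤ f₂ x - f₂ m := by
  set w := x - m with hw
  refine fbc_le_limit (C := κ / 2 * ‖w‖ ^ 2) (fun l hl hl1 => ?_)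
    (by positivity)
  set p := m + l • w with hp
  have hmem := hm p
  have hdesc := fbc_descent hdiff hκ hlip m p
  have ep : p - m = l • w := by simp [hp]
  have e1 : ⟪gradient f₁ m, p - m⟫ = l * ⟪gradient f₁ m, w⟫ := by
    rw [ep, real_inner_smul_right]
  have e2 : ‖p - m‖ ^ 2 = l ^ 2 * ‖w‖ ^ 2 := by
    rw [ep, norm_smul, Real.norm_eq_abs, abs_of_pos hl, mul_pow]
  have hconv2 : f₂ p ≤ l * f₂ x + (1 - l) * f₂ m := by
    have := hf₂conv.2 (Set.mem_univ x) (Set.mem_univ m) hl.le (by linarith)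
      (by ring : l + (1 - l) = 1)
    have hpe : p = l • x + (1 - l) • m := by rw [hp, hw]; module
    rw [hpe]; exact this
  have hmul : l * -⟪gradient f₁ m, w⟫ ≤ l * ((f₂ x - f₂ m) + l * (κ / 2 * ‖w‖ ^ 2)) := by
    rw [e1, e2] at hdesc
    nlinarith [hmem, hdesc, hconv2]
  exact le_of_mul_le_mul_left hmul hl

lemma fbc_prox_vi {f₂ : E → ℝ} (hf₂conv : ConvexOn ℝ Set.univ f₂)
    {μt : ℝ} (hμt : 0 < μt) {p β : E}
    (hit : ∀ x, μt * f₂ p + (1 / 2) * ‖p - β‖ ^ 2 ≤ μt * f₂ x + (1 / 2) * ‖x - β‖ ^ 2)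
    (x : E) : ⟪β - p, x - p⟫ ≤ μt * (f₂ x - f₂ p) := by
  set w := x - p with hw
  refine fbc_le_limit (C := ‖w‖ ^ 2 / 2) (fun l hl hl1 => ?_) (by positivity)
  have hit' := hit (p + l • w)
  have e0 : p + l • w - β = (p - β) + l • w := by abel
  have e1 : ‖p + l • w - β‖ ^ 2 = ‖p - β‖ ^ 2 + 2 * (l * ⟪p - β, w⟫) + l ^ 2 * ‖w‖ ^ 2 := by
    rw [e0, @norm_add_sq_real, real_inner_smul_right, norm_smul, Real.norm_eq_abs,
      abs_of_pos hl, mul_pow]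
  have hconv2 : f₂ (p + l • w) ≤ l * f₂ x + (1 - l) * f₂ p := by
    have := hf₂conv.2 (Set.mem_univ x) (Set.mem_univ p) hl.le (by linarith)
      (by ring : l + (1 - l) = 1)
    have hpe : p + l • w = l • x + (1 - l) • p := by rw [hw]; module
    rw [hpe]; exact this
  have e2 : ⟪β - p, w⟫ = -⟪p - β, w⟫ := by
    rw [show β - p = -(p - β) by abel, inner_neg_left]
  have hmul : l * ⟪β - p, w⟫ ≤ l * (μt * (f₂ x - f₂ p) + l * (‖w‖ ^ 2 / 2)) := by
    rw [e2]
    rw [e1] at hit'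
    nlinarith [hit', hconv2, hμt]
  exact le_of_mul_le_mul_left hmul hl

lemma fbc_tendsto_of_sq {u : ℕ → E} (h : Tendsto (fun t => ‖u t‖ ^ 2) atTop (𝓝 0)) :
    Tendsto u atTop (𝓝 0) := by
  rw [tendsto_zero_iff_norm_tendsto_zero]
  have h2 := (Real.continuous_sqrt.tendsto 0).comp h
  simp only [Function.comp, Real.sqrt_zero] at h2
  exact (tendsto_congr fun t => Real.sqrt_sq (norm_nonneg (u t))).mp h2

end Aux

set_option maxHeartbeats 1600000 in
/-- Convergence of the proximal backward–forward splitting iteration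
(Theorem 1 of the paper): if `f₁` is convex differentiable with `κ`-Lipschitz
gradient, `f₂` is convex continuous, the set of minimizers of `f₁ + f₂` is
nonempty, and the step sizes satisfy `0 < inf μ_t ≤ sup μ_t < 2/κ`, then the
iterates `α_{t+1} = prox_{μ_t f₂}(α_t − μ_t ∇f₁(α_t))` converge to a
minimizer of `f₁ + f₂`. -/
theorem forward_backward_converges (L : ℕ)
    (f₁ f₂ : EuclideanSpace ℝ (Fin L) → ℝ)
    (hf₁conv : ConvexOn ℝ Set.univ f₁) (hf₁diff : Differentiable ℝ f₁)
    (κ : ℝ) (hκ : 0 < κ)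
    (hf₁lip : LipschitzWith (Real.toNNReal κ) (gradient f₁))
    (hf₂conv : ConvexOn ℝ Set.univ f₂) (hf₂cont : Continuous f₂)
    (hM : ∃ m : EuclideanSpace ℝ (Fin L), ∀ y, f₁ m + f₂ m ≤ f₁ y + f₂ y)
    (μ : ℕ → ℝ)
    (hμ_below : ∃ ε > (0 : ℝ), ∀ t, ε ≤ μ t)
    (hμ_above : ∃ c : ℝ, c < 2 / κ ∧ ∀ t, μ t ≤ c)
    (α : ℕ → EuclideanSpace ℝ (Fin L))
    (hiter : ∀ t, ∀ x,
      μ t * f₂ (α (t + 1)) +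
          (1 / 2) * ‖α (t + 1) - (α t - μ t • gradient f₁ (α t))‖ ^ 2 ≤
        μ t * f₂ x + (1 / 2) * ‖x - (α t - μ t • gradient f₁ (α t))‖ ^ 2) :
    ∃ a : EuclideanSpace ℝ (Fin L),
      (∀ y, f₁ a + f₂ a ≤ f₁ y + f₂ y) ∧
      Filter.Tendsto α Filter.atTop (nhds a) := by
  obtain ⟨m, hm⟩ := hM
  obtain ⟨ε0, hε0, hμε⟩ := hμ_below
  obtain ⟨c, hc, hμc⟩ := hμ_above
  set g := gradient f₁ with hg
  have hμpos : ∀ t, 0 < μ t := fun t => lt_of_lt_of_le hε0 (hμε t)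
  have hεc : ε0 ≤ c := le_trans (hμε 0) (hμc 0)
  set δ := ε0 * (2 / κ - c) with hδ
  have hδpos : 0 < δ := mul_pos hε0 (by linarith)
  have hg_cont : Continuous g := hf₁lip.continuous
  have proxVI : ∀ t x, ⟪(α t - μ t • g (α t)) - α (t + 1), x - α (t + 1)⟫ ≤
      μ t * (f₂ x - f₂ (α (t + 1))) :=
    fun t x => fbc_prox_vi hf₂conv (hμpos t) (hiter t) x
  have coco := fbc_cocoercive hf₁conv hf₁diff hκ hf₁lip
  -- the key Fejér-type decrease, valid for any minimizer-like point m'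
  have key : ∀ m' : EuclideanSpace ℝ (Fin L),
      (∀ x, -⟪g m', x - m'⟫ ≤ f₂ x - f₂ m') → ∀ t,
      ‖α (t + 1) - m'‖ ^ 2 + ‖(α t - α (t + 1)) - μ t • (g (α t) - g m')‖ ^ 2
        + δ * ‖g (α t) - g m'‖ ^ 2 ≤ ‖α t - m'‖ ^ 2 := by
    intro m' hVI t
    set p := α (t + 1) with hp
    set β := α t - μ t • g (α t) with hβ
    set d := g (α t) - g m' with hdd
    set u := (α t - m') - μ t • d with hu
    set w := p - m' with hw
    -- step (i) : ‖w‖² ≤ ⟪u, w⟫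
    have h1 := proxVI t m'
    have h2 : μ t * (-⟪g m', p - m'⟫) ≤ μ t * (f₂ p - f₂ m') :=
      mul_le_mul_of_nonneg_left (hVI p) (hμpos t).le
    have euw : u - w = (β - p) + μ t • g m' := by
      simp only [hu, hw, hβ, hdd, smul_sub]; abel
    have hid : ⟪u, w⟫ - ‖w‖ ^ 2 = -⟪β - p, m' - p⟫ + μ t * ⟪g m', w⟫ := by
      rw [← real_inner_self_eq_norm_sq, ← inner_sub_left, euw, inner_add_left,
        real_inner_smul_left, show m' - p = -w from by rw [hw, neg_sub], inner_neg_right]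
      ring
    have hi : ‖w‖ ^ 2 ≤ ⟪u, w⟫ := by
      have hww : ⟪g m', w⟫ = ⟪g m', p - m'⟫ := by rw [hw]
      rw [hww] at hid
      linarith
    -- step (ii) : ‖u‖² ≤ ‖α t - m'‖² - δ * ‖d‖²
    have hco := coco m' (α t)
    have hunorm : ‖u‖ ^ 2 = ‖α t - m'‖ ^ 2 - 2 * (μ t * ⟪d, α t - m'⟫)
        + μ t ^ 2 * ‖d‖ ^ 2 := by
      rw [hu, @norm_sub_sq_real, real_inner_smul_right, norm_smul, Real.norm_eq_abs,
        abs_of_pos (hμpos t), mul_pow, real_inner_comm]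
    have h2κ : 2 / κ = 2 * (1 / κ) := by ring
    have hstep : δ ≤ 2 * (1 / κ) * μ t - μ t ^ 2 := by
      rw [hδ, h2κ]
      nlinarith [mul_nonneg (sub_nonneg.2 (hμε t)) (by rw [h2κ] at hc; linarith :
        (0:ℝ) ≤ 2 * (1 / κ) - c), mul_nonneg (hμpos t).le (sub_nonneg.2 (hμc t))]
    have h2co : 2 * μ t * ((1 / κ) * ‖d‖ ^ 2) ≤ 2 * μ t * ⟪d, α t - m'⟫ :=
      mul_le_mul_of_nonneg_left hco (by linarith [hμpos t])
    have hii : ‖u‖ ^ 2 ≤ ‖α t - m'‖ ^ 2 - δ * ‖d‖ ^ 2 := by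
      nlinarith [sq_nonneg ‖d‖, hstep, h2co, hunorm]
    -- step (iii)
    have hr : α t - p - μ t • d = u - w := by
      rw [hu, hw]; module
    have huw2 : ‖u - w‖ ^ 2 = ‖u‖ ^ 2 - 2 * ⟪u, w⟫ + ‖w‖ ^ 2 := by
      rw [@norm_sub_sq_real]
    show ‖w‖ ^ 2 + ‖α t - p - μ t • d‖ ^ 2 + δ * ‖d‖ ^ 2 ≤ ‖α t - m'‖ ^ 2
    rw [hr]
    nlinarith [hi, hii, huw2]
  -- apply with the true minimizer m
  have minVI := fbc_min_subgrad hf₁diff hκ hf₁lip hf₂conv hm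
  have keym := key m minVI
  set D : ℕ → ℝ := fun t => ‖α t - m‖ ^ 2 with hD
  set dd : ℕ → EuclideanSpace ℝ (Fin L) := fun t => g (α t) - g m with hdd
  set rr : ℕ → EuclideanSpace ℝ (Fin L) := fun t => (α t - α (t + 1)) - μ t • dd t with hrr
  have hDineq : ∀ t, D (t + 1) + ‖rr t‖ ^ 2 + δ * ‖dd t‖ ^ 2 ≤ D t := fun t => keym t
  have hDanti : Antitone D := antitone_nat_of_succ_le fun t => by
    have := hDineq t
    nlinarith [sq_nonneg ‖rr t‖, mul_nonneg hδpos.le (sq_nonneg ‖dd t‖)]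
  have hDbdd : BddBelow (Set.range D) := ⟨0, by rintro x ⟨t, rfl⟩; positivity⟩
  have hDlim : Tendsto D atTop (𝓝 (⨅ t, D t)) := tendsto_atTop_ciInf hDanti hDbdd
  have hDsucc : Tendsto (fun t => D (t + 1)) atTop (𝓝 (⨅ t, D t)) :=
    hDlim.comp (tendsto_add_atTop_nat 1)
  have hgap : Tendsto (fun t => D t - D (t + 1)) atTop (𝓝 0) := by
    simpa using hDlim.sub hDsucc
  have hr2 : Tendsto (fun t => ‖rr t‖ ^ 2) atTop (𝓝 0) := by
    refine squeeze_zero (fun t => by positivity) (fun t => ?_) hgap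
    have := hDineq t
    nlinarith [mul_nonneg hδpos.le (sq_nonneg ‖dd t‖)]
  have hd2 : Tendsto (fun t => ‖dd t‖ ^ 2) atTop (𝓝 0) := by
    have hgap' : Tendsto (fun t => (1 / δ) * (D t - D (t + 1))) atTop (𝓝 0) := by
      simpa using hgap.const_mul (1 / δ)
    refine squeeze_zero (fun t => by positivity) (fun t => ?_) hgap'
    have h := hDineq t
    have hδd : δ * ‖dd t‖ ^ 2 ≤ D t - D (t + 1) := by linarith [sq_nonneg ‖rr t‖]
    calc ‖dd t‖ ^ 2 = (1 / δ) * (δ * ‖dd t‖ ^ 2) := by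
          rw [one_div, inv_mul_cancel_left₀ (ne_of_gt hδpos)]
      _ ≤ (1 / δ) * (D t - D (t + 1)) := mul_le_mul_of_nonneg_left hδd (by positivity)
  have hrlim : Tendsto rr atTop (𝓝 0) := fbc_tendsto_of_sq hr2
  have hdlim : Tendsto dd atTop (𝓝 0) := fbc_tendsto_of_sq hd2
  have hddnorm : Tendsto (fun t => ‖dd t‖) atTop (𝓝 0) := by
    simpa using hdlim.norm
  have hμd : Tendsto (fun t => μ t • dd t) atTop (𝓝 0) := by
    refine squeeze_zero_norm (fun t => ?_) (by simpa using hddnorm.const_mul c)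
    rw [norm_smul, Real.norm_eq_abs, abs_of_pos (hμpos t)]
    exact mul_le_mul_of_nonneg_right (hμc t) (norm_nonneg _)
  have hstep0 : Tendsto (fun t => α t - α (t + 1)) atTop (𝓝 0) := by
    have := hrlim.add hμd
    simp only [add_zero] at this
    refine this.congr fun t => ?_
    rw [hrr]
    exact sub_add_cancel _ _
  -- boundedness and subsequence
  have hbd : ∀ t, α t ∈ Metric.closedBall (0 : EuclideanSpace ℝ (Fin L)) (‖m‖ + ‖α 0 - m‖) := by
    intro t
    have hDt : D t ≤ D 0 := hDanti (Nat.zero_le t)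
    have h1 : ‖α t - m‖ ≤ ‖α 0 - m‖ := by
      simp only [hD] at hDt
      nlinarith [norm_nonneg (α t - m), norm_nonneg (α 0 - m)]
    have h2 : ‖α t‖ ≤ ‖m‖ + ‖α t - m‖ := by
      calc ‖α t‖ = ‖m + (α t - m)‖ := by congr 1; abel
        _ ≤ ‖m‖ + ‖α t - m‖ := norm_add_le _ _
    rw [Metric.mem_closedBall, dist_zero_right]
    linarith
  obtain ⟨a, -, φ, hφmono, hφlim⟩ :=
    tendsto_subseq_of_bounded Metric.isBounded_closedBall hbd
  have hφtop : Tendsto φ atTop atTop := hφmono.tendsto_atTop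
  have hαφ : Tendsto (fun k => α (φ k)) atTop (𝓝 a) := hφlim
  have hαφ1 : Tendsto (fun k => α (φ k + 1)) atTop (𝓝 a) := by
    have h0 : Tendsto (fun k => α (φ k) - α (φ k + 1)) atTop (𝓝 0) := hstep0.comp hφtop
    have := hαφ.sub h0
    simp only [sub_zero] at this
    refine this.congr fun k => ?_
    abel
  -- the cluster point is a minimizer
  have ha_min : ∀ x, f₁ a + f₂ a ≤ f₁ x + f₂ x := by
    intro x
    set T : ℕ → ℝ := fun t => f₂ x - f₂ (α (t + 1)) + ⟪g (α t), x - α (t + 1)⟫ with hT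
    set I : ℕ → ℝ := fun t => ⟪α t - α (t + 1), x - α (t + 1)⟫ with hI
    have hIT : ∀ t, I t ≤ μ t * T t := by
      intro t
      have h1 := proxVI t x
      have e : (α t - μ t • g (α t)) - α (t + 1)
          = (α t - α (t + 1)) - μ t • g (α t) := by abel
      rw [e, inner_sub_left, real_inner_smul_left] at h1
      simp only [hI, hT]
      linarith
    have hTlow : ∀ t, -|I t| / ε0 ≤ T t := by
      intro t
      rcases le_or_gt 0 (T t) with h | h
      · have h0 : 0 ≤ |I t| / ε0 := by positivity
        calc -|I t| / ε0 = -(|I t| / ε0) := by ring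
          _ ≤ 0 := by linarith
          _ ≤ T t := h
      · have h1 : μ t * T t ≤ ε0 * T t := mul_le_mul_of_nonpos_right (hμε t) h.le
        have h2 : -|I t| ≤ ε0 * T t := le_trans (neg_abs_le _) (le_trans (hIT t) h1)
        rw [div_le_iff₀ hε0]
        linarith
    have hIlim : Tendsto (fun k => I (φ k)) atTop (𝓝 0) := by
      have h0 : Tendsto (fun k => α (φ k) - α (φ k + 1)) atTop (𝓝 0) := hstep0.comp hφtop
      have h1 : Tendsto (fun k => x - α (φ k + 1)) atTop (𝓝 (x - a)) :=
        tendsto_const_nhds.sub hαφ1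
      have := Filter.Tendsto.inner (𝕜 := ℝ) h0 h1
      simpa using this
    have hL : Tendsto (fun k => -|I (φ k)| / ε0) atTop (𝓝 0) := by
      have := (hIlim.abs.neg).div_const ε0
      simpa using this
    have hTlim : Tendsto (fun k => T (φ k)) atTop
        (𝓝 (f₂ x - f₂ a + ⟪g a, x - a⟫)) := by
      have h1 : Tendsto (fun k => f₂ (α (φ k + 1))) atTop (𝓝 (f₂ a)) :=
        (hf₂cont.tendsto a).comp hαφ1
      have h2 : Tendsto (fun k => g (α (φ k))) atTop (𝓝 (g a)) :=
        (hg_cont.tendsto a).comp hαφ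
      have h3 : Tendsto (fun k => x - α (φ k + 1)) atTop (𝓝 (x - a)) :=
        tendsto_const_nhds.sub hαφ1
      exact (tendsto_const_nhds.sub h1).add (Filter.Tendsto.inner (𝕜 := ℝ) h2 h3)
    have h0T : (0:ℝ) ≤ f₂ x - f₂ a + ⟪g a, x - a⟫ :=
      le_of_tendsto_of_tendsto' hL hTlim fun k => hTlow (φ k)
    have hgrad := fbc_convex_grad hf₁conv hf₁diff a x
    rw [← hg] at hgrad
    linarith
  refine ⟨a, ha_min, ?_⟩
  -- Fejér monotonicity w.r.t. a gives full convergence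
  have minVIa := fbc_min_subgrad hf₁diff hκ hf₁lip hf₂conv ha_min
  have keya := key a minVIa
  have hanti : Antitone fun t => ‖α t - a‖ := antitone_nat_of_succ_le fun t => by
    nlinarith [keya t, norm_nonneg (α (t + 1) - a), norm_nonneg (α t - a),
      sq_nonneg ‖(α t - α (t + 1)) - μ t • (g (α t) - g a)‖,
      mul_nonneg hδpos.le (sq_nonneg ‖g (α t) - g a‖)]
  have hsub0 : Tendsto (fun k => ‖α (φ k) - a‖) atTop (𝓝 0) := by
    have := (hαφ.sub (tendsto_const_nhds (x := a))).norm
    simpa using this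
  rw [Metric.tendsto_atTop]
  intro ε' hε'
  obtain ⟨K, hK⟩ := (Metric.tendsto_atTop.1 hsub0) ε' hε'
  refine ⟨φ K, fun t ht => ?_⟩
  have h1 : ‖α t - a‖ ≤ ‖α (φ K) - a‖ := hanti ht
  have h2 := hK K le_rfl
  rw [Real.dist_eq, sub_zero, abs_of_nonneg (norm_nonneg _)] at h2
  rw [dist_eq_norm]
  linarith
end
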